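/- Let X, Y be real Hilbert spaces, ρ > 0, x* ∈ X, B_ρ(x*) the ball of radius ρ around x*, F : B_ρ(x*) → Y Fréchet-differentiable, and η ∈ [0,1]. Then the weak tangential cone condition ⟨F(x) − F(x*) − F′(x)(x − x*), F(x) − F(x*)⟩ ≤ η‖F(x) − F(x*)‖² for all x ∈ B_ρ(x*) holds if and only if for every x ∈ B_ρ(x*) the map t ↦ t^{−2(1−η)} · J_LS(x* + t(x − x*)) is monotonically increasing on (0,1], where J_LS(x) = ½‖F(x) − F(x*)‖². -/

import Mathlib

open scoped RealInnerProductSpace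
open Metric Filter Topology

section Aux

variable {X Y : Type*} [NormedAddCommGroup X] [InnerProductSpace ℝ X]
  [NormedAddCommGroup Y] [InnerProductSpace ℝ Y]

/-- membership of points on the segment -/
lemma wtc_mem (xs : X) (ρ : ℝ) (x : X) (hx : x ∈ closedBall xs ρ)
    {t : ℝ} (ht0 : 0 ≤ t) (ht1 : t ≤ 1) : xs + t • (x - xs) ∈ closedBall xs ρ := by
  simp only [mem_closedBall, dist_eq_norm] at hx ⊢
  calc ‖xs + t • (x - xs) - xs‖ = |t| * ‖x - xs‖ := by
        rw [add_sub_cancel_left, norm_smul, Real.norm_eq_abs]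
    _ ≤ 1 * ‖x - xs‖ := by
        gcongr
        rwa [abs_of_nonneg ht0]
    _ ≤ ρ := by rw [one_mul]; exact hx

/-- derivative of `t ↦ ½‖F(xs + t v) - F xs‖²`. -/
lemma wtc_phi_hasDerivAt (xs : X) (ρ : ℝ) (F : X → Y) (F' : X → X →L[ℝ] Y)
    (hF : ∀ x ∈ closedBall xs ρ, HasFDerivAt F (F' x) x)
    (x : X) (hx : x ∈ closedBall xs ρ) {t : ℝ} (ht0 : 0 ≤ t) (ht1 : t ≤ 1) :
    HasDerivAt (fun s : ℝ => (1 : ℝ) / 2 * ‖F (xs + s • (x - xs)) - F xs‖ ^ 2)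
      ⟪F' (xs + t • (x - xs)) (x - xs), F (xs + t • (x - xs)) - F xs⟫ t := by
  set v := x - xs with hv
  have hmem := wtc_mem xs ρ x hx ht0 ht1
  have hp : HasDerivAt (fun s : ℝ => xs + s • v) v t := by
    simpa using ((hasDerivAt_id t).smul_const v).const_add xs
  have hq : HasDerivAt (fun s : ℝ => F (xs + s • v) - F xs)
      (F' (xs + t • v) v) t := ((hF _ hmem).comp_hasDerivAt t hp).sub_const _
  have hinner := (hq.inner ℝ hq).const_mul ((1 : ℝ) / 2)
  have heq : (fun s : ℝ => (1 : ℝ) / 2 *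
      ⟪F (xs + s • v) - F xs, F (xs + s • v) - F xs⟫)
      = fun s : ℝ => (1 : ℝ) / 2 * ‖F (xs + s • v) - F xs‖ ^ 2 := by
    funext s
    rw [real_inner_self_eq_norm_sq]
  rw [heq] at hinner
  refine hinner.congr_deriv ?_
  rw [real_inner_comm (F (xs + t • v) - F xs) (F' (xs + t • v) v)]
  ring

end Aux

/-- The weak tangential cone condition holds with constant `η ∈ [0,1]`
iff for every `x` in the ball the map `t ↦ t^(-2(1-η)) · J_LS(x* + t(x - x*))` is
monotonically increasing on `(0,1]`, where `J_LS(x) = ½‖F x - F x*‖²`. -/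
theorem weak_tangential_cone_iff_monotone
    {X Y : Type*} [NormedAddCommGroup X] [InnerProductSpace ℝ X] [CompleteSpace X]
    [NormedAddCommGroup Y] [InnerProductSpace ℝ Y] [CompleteSpace Y]
    (xs : X) (ρ : ℝ) (hρ : 0 < ρ)
    (F : X → Y) (F' : X → X →L[ℝ] Y)
    (hF : ∀ x ∈ closedBall xs ρ, HasFDerivAt F (F' x) x)
    (η : ℝ) (hη0 : 0 ≤ η) (hη1 : η ≤ 1) :
    (∀ x ∈ closedBall xs ρ,
        ⟪F x - F xs - F' x (x - xs), F x - F xs⟫ ≤ η * ‖F x - F xs‖ ^ 2) ↔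
    (∀ x ∈ closedBall xs ρ,
        MonotoneOn
          (fun t : ℝ =>
            t ^ (-(2 * (1 - η))) * ((1 : ℝ) / 2 * ‖F (xs + t • (x - xs)) - F xs‖ ^ 2))
          (Set.Ioc (0 : ℝ) 1)) := by
  set a : ℝ := -(2 * (1 - η)) with ha
  constructor
  · -- cone condition ⟹ monotone
    intro hcone x hx
    set φ : ℝ → ℝ := fun s => (1 : ℝ) / 2 * ‖F (xs + s • (x - xs)) - F xs‖ ^ 2 with hφ
    set g : ℝ → ℝ := fun s => s ^ a * φ s with hg
    -- g has nonnegative derivative at every point of (0,1]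
    have hderiv : ∀ y ∈ Set.Ioc (0 : ℝ) 1, ∃ d, HasDerivAt g d y ∧ 0 ≤ d := by
      intro y hy
      obtain ⟨hy0, hy1⟩ := hy
      have hφd := wtc_phi_hasDerivAt xs ρ F F' hF x hx hy0.le hy1
      have hrd : HasDerivAt (fun s : ℝ => s ^ a) (a * y ^ (a - 1)) y :=
        Real.hasDerivAt_rpow_const (Or.inl hy0.ne')
      have hgd := hrd.mul hφd
      refine ⟨_, hgd, ?_⟩
      -- the cone condition at the point on the segment
      set z := xs + y • (x - xs) with hz
      have hzmem := wtc_mem xs ρ x hx hy0.le hy1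
      have hc := hcone z hzmem
      have hzs : z - xs = y • (x - xs) := by rw [hz]; abel
      rw [inner_sub_left, real_inner_self_eq_norm_sq, hzs, map_smul,
        real_inner_smul_left] at hc
      -- hc : ‖F z - F xs‖^2 - y * ⟪F' z (x - xs), F z - F xs⟫ ≤ η * ‖F z - F xs‖^2
      have hφy : φ y = (1 : ℝ) / 2 * ‖F z - F xs‖ ^ 2 := rfl
      have key : 2 * (1 - η) * φ y ≤ y * ⟪F' z (x - xs), F z - F xs⟫ := by
        rw [hφy]; nlinarith [hc]
      have hyp : (0 : ℝ) < y ^ (a - 1) := Real.rpow_pos_of_pos hy0 _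
      have hsplit : y ^ a = y ^ (a - 1) * y := by
        rw [← Real.rpow_add_one hy0.ne' (a - 1), sub_add_cancel]
      rw [hsplit]
      have : a * y ^ (a - 1) * φ y + y ^ (a - 1) * y *
          ⟪F' z (x - xs), F z - F xs⟫
          = y ^ (a - 1) * (y * ⟪F' z (x - xs), F z - F xs⟫ - 2 * (1 - η) * φ y) := by
        rw [ha]; ring
      rw [this]
      exact mul_nonneg hyp.le (by linarith)
    -- conclude monotonicity via MVT on compact subintervals
    intro s hs t ht hst
    have hmono : MonotoneOn g (Set.Icc s t) := by
      apply monotoneOn_of_deriv_nonneg (convex_Icc s t)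
      · intro y hy
        obtain ⟨d, hd, _⟩ := hderiv y ⟨lt_of_lt_of_le hs.1 hy.1, le_trans hy.2 ht.2⟩
        exact hd.continuousAt.continuousWithinAt
      · intro y hy
        rw [interior_Icc] at hy
        obtain ⟨d, hd, _⟩ := hderiv y ⟨lt_trans hs.1 hy.1, le_of_lt (lt_of_lt_of_le hy.2 ht.2)⟩
        exact hd.differentiableAt.differentiableWithinAt
      · intro y hy
        rw [interior_Icc] at hy
        obtain ⟨d, hd, hd0⟩ := hderiv y ⟨lt_trans hs.1 hy.1, le_of_lt (lt_of_lt_of_le hy.2 ht.2)⟩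
        rw [hd.deriv]; exact hd0
    exact hmono (Set.left_mem_Icc.2 hst) (Set.right_mem_Icc.2 hst) hst
  · -- monotone ⟹ cone condition
    intro hmono x hx
    set φ : ℝ → ℝ := fun s => (1 : ℝ) / 2 * ‖F (xs + s • (x - xs)) - F xs‖ ^ 2 with hφ
    set g : ℝ → ℝ := fun s => s ^ a * φ s with hg
    have hφd := wtc_phi_hasDerivAt xs ρ F F' hF x hx zero_le_one le_rfl
    have hrd : HasDerivAt (fun s : ℝ => s ^ a) (a * (1 : ℝ) ^ (a - 1)) 1 :=
      Real.hasDerivAt_rpow_const (Or.inl one_ne_zero)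
    have hgd : HasDerivAt g (a * (1 : ℝ) ^ (a - 1) * φ 1 + (1 : ℝ) ^ a *
        ⟪F' (xs + (1 : ℝ) • (x - xs)) (x - xs),
        F (xs + (1 : ℝ) • (x - xs)) - F xs⟫) 1 := hrd.mul hφd
    -- the derivative at 1 is nonnegative since g is monotone on (0,1]
    set d := a * (1 : ℝ) ^ (a - 1) * φ 1 + (1 : ℝ) ^ a *
        ⟪F' (xs + (1 : ℝ) • (x - xs)) (x - xs),
        F (xs + (1 : ℝ) • (x - xs)) - F xs⟫ with hd
    have hd0 : 0 ≤ d := by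
      have hslope := hasDerivAt_iff_tendsto_slope.1 hgd
      have hsub : 𝓝[Set.Ioo (0 : ℝ) 1] 1 ≤ 𝓝[≠] 1 :=
        nhdsWithin_mono 1 (fun y hy => ne_of_lt hy.2)
      have hslope' := hslope.mono_left hsub
      have hne : (𝓝[Set.Ioo (0 : ℝ) 1] (1 : ℝ)).NeBot := right_nhdsWithin_Ioo_neBot one_pos
      refine ge_of_tendsto hslope' ?_
      filter_upwards [self_mem_nhdsWithin] with y hy
      have h1 : g y ≤ g 1 := hmono x hx ⟨hy.1, hy.2.le⟩ (Set.mem_Ioc.2 ⟨one_pos, le_rfl⟩) hy.2.le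
      have h2 : y - 1 < 0 := by linarith [hy.2]
      rw [slope_def_field]
      exact div_nonneg_of_nonpos (by linarith) h2.le
    -- unfold g and rearrange
    have h11 : xs + (1 : ℝ) • (x - xs) = x := by rw [one_smul]; abel
    rw [hd, h11, Real.one_rpow] at hd0
    have hφ1 : φ 1 = (1 : ℝ) / 2 * ‖F x - F xs‖ ^ 2 := by rw [hφ]; simp [h11]
    rw [hφ1] at hd0
    rw [inner_sub_left, real_inner_self_eq_norm_sq]
    simp only [Real.one_rpow] at hd0
    rw [ha] at hd0
    nlinarith [hd0]
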